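/- For a regular expression with intersection e over alphabet Σ (syntax: letters, concatenation, union, intersection, and strict iteration ⁺, without 1 and 0 necessarily but with L denoting the language semantics), and for every nonempty word w ∈ Σ⁺: w ∈ L(e) if and only if the word-graph of w is below some graph in G(e) modulo homomorphism. Consequently, Σ⁺ ⊆ L(e) iff Trm(Σ⁺) ⊆ ⌊Trm(e)⌋, i.e., iff Σ⁺ ≤ e is valid in all relation algebras. -/

import Mathlib

/-- A 2-pointed labelled directed graph over label set `X`:
a finite vertex type, a set of labelled edges, and distinguished
input and output vertices. -/
structure PGraph (X : Type) where
  V : Type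
  fin : Finite V
  E : Set (V × X × V)
  inp : V
  out : V

/-- A graph homomorphism preserves the input, the output, and labelled edges. -/
def IsHom {X : Type} (G H : PGraph X) (φ : G.V → H.V) : Prop :=
  φ G.inp = H.inp ∧ φ G.out = H.out ∧
    ∀ p a q, (p, a, q) ∈ G.E → (φ p, a, φ q) ∈ H.E

/-- `gle G G'` (written `G ≲ G'`) iff there is a homomorphism from `G'` to `G`. -/
def gle {X : Type} (G G' : PGraph X) : Prop := ∃ φ : G'.V → G.V, IsHom G' G φ

/-- Graph of a variable: two vertices, one labelled edge from input to output. -/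
def gvar {X : Type} (a : X) : PGraph X :=
  ⟨Bool, inferInstance, {(false, a, true)}, false, true⟩

/-- Graph of `1`: one vertex, no edges. -/
def gone {X : Type} : PGraph X := ⟨Unit, inferInstance, ∅, (), ()⟩

/-- Graph of `⊤`: two isolated vertices. -/
def gtop {X : Type} : PGraph X := ⟨Bool, inferInstance, ∅, false, true⟩

/-- Converse of a graph: swap input and output. -/
def gconv {X : Type} (G : PGraph X) : PGraph X := ⟨G.V, G.fin, G.E, G.out, G.inp⟩

/-- Series composition: merge the output of `G` with the input of `H`. -/
def gseq {X : Type} (G H : PGraph X) : PGraph X :=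
  let r : G.V ⊕ H.V → G.V ⊕ H.V → Prop :=
    fun x y => x = Sum.inl G.out ∧ y = Sum.inr H.inp
  { V := Quot r
    fin := by
      have := G.fin; have := H.fin
      exact Finite.of_surjective (Quot.mk r) (fun q => Quot.exists_rep q)
    E := { e | (∃ p a q, (p, a, q) ∈ G.E ∧
                  e = (Quot.mk r (.inl p), a, Quot.mk r (.inl q)))
             ∨ (∃ p a q, (p, a, q) ∈ H.E ∧
                  e = (Quot.mk r (.inr p), a, Quot.mk r (.inr q))) }
    inp := Quot.mk r (.inl G.inp)
    out := Quot.mk r (.inr H.out) }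

/-- Parallel composition: merge the inputs and merge the outputs. -/
def gpar {X : Type} (G H : PGraph X) : PGraph X :=
  let r : G.V ⊕ H.V → G.V ⊕ H.V → Prop :=
    fun x y => (x = Sum.inl G.inp ∧ y = Sum.inr H.inp) ∨
               (x = Sum.inl G.out ∧ y = Sum.inr H.out)
  { V := Quot r
    fin := by
      have := G.fin; have := H.fin
      exact Finite.of_surjective (Quot.mk r) (fun q => Quot.exists_rep q)
    E := { e | (∃ p a q, (p, a, q) ∈ G.E ∧
                  e = (Quot.mk r (.inl p), a, Quot.mk r (.inl q)))
             ∨ (∃ p a q, (p, a, q) ∈ H.E ∧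
                  e = (Quot.mk r (.inr p), a, Quot.mk r (.inr q))) }
    inp := Quot.mk r (.inl G.inp)
    out := Quot.mk r (.inl G.out) }

/-- Simple terms: variables, composition and intersection only. -/
inductive STrm (X : Type) : Type
  | var : X → STrm X
  | comp : STrm X → STrm X → STrm X
  | inter : STrm X → STrm X → STrm X

/-- The (series-parallel) graph of a simple term. -/
def sgrOf {X : Type} : STrm X → PGraph X
  | .var a => gvar a
  | .comp u v => gseq (sgrOf u) (sgrOf v)
  | .inter u v => gpar (sgrOf u) (sgrOf v)

/-- The word-graph of a word `w = a₁…aₙ`: the path with `n+1` vertices and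
edges labelled `a₁,…,aₙ` from input to output. -/
def wordGraph {A : Type} (w : List A) : PGraph A where
  V := Fin (w.length + 1)
  fin := inferInstance
  E := { e | ∃ k : Fin w.length,
          e = (⟨(k : ℕ), Nat.lt_succ_of_lt k.isLt⟩, w.get k,
               ⟨(k : ℕ) + 1, Nat.succ_lt_succ k.isLt⟩) }
  inp := ⟨0, Nat.succ_pos _⟩
  out := ⟨w.length, Nat.lt_succ_self _⟩

/-- Simple expressions: letters, union, concatenation, intersection, and
strict iteration. -/
inductive SExp (X : Type) : Type
  | var : X → SExp X
  | plus : SExp X → SExp X → SExp X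
  | comp : SExp X → SExp X → SExp X
  | inter : SExp X → SExp X → SExp X
  | iter : SExp X → SExp X

/-- Language semantics of simple expressions (`∩` is language intersection,
`⁺` is strict iteration). -/
def slang {A : Type} : SExp A → Language A
  | .var a => {[a]}
  | .plus e f => slang e + slang f
  | .comp e f => slang e * slang f
  | .inter e f => {w | w ∈ slang e ∧ w ∈ slang f}
  | .iter e => slang e * KStar.kstar (slang e)

/-- The set of simple terms of a simple expression. -/
def strms {X : Type} : SExp X → Set (STrm X)
  | .var a => {STrm.var a}
  | .plus e f => strms e ∪ strms f
  | .comp e f => {w | ∃ u ∈ strms e, ∃ v ∈ strms f, w = STrm.comp u v}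
  | .inter e f => {w | ∃ u ∈ strms e, ∃ v ∈ strms f, w = STrm.inter u v}
  | .iter e => {w | ∃ u, ∃ l : List (STrm X),
      u ∈ strms e ∧ (∀ v ∈ l, v ∈ strms e) ∧ w = l.foldl STrm.comp u}

/-- Relational interpretation of a simple expression. -/
def sinterp {X S : Type} (σ : X → S → S → Prop) : SExp X → S → S → Prop
  | .var a => σ a
  | .plus e f => fun i j => sinterp σ e i j ∨ sinterp σ f i j
  | .comp e f => fun i j => ∃ k, sinterp σ e i k ∧ sinterp σ f k j
  | .inter e f => fun i j => sinterp σ e i j ∧ sinterp σ f i j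
  | .iter e => Relation.TransGen (sinterp σ e)

/-- The expression `a₁ + ⋯ + aₖ` summing a nonempty list of letters. -/
def sumOf {X : Type} (a : X) (l : List X) : SExp X :=
  l.foldl (fun e b => SExp.plus e (SExp.var b)) (SExp.var a)

section AuxHelpers

variable {A : Type}

/-- Language of a simple term. -/
def tlang : STrm A → Language A
  | .var a => {[a]}
  | .comp u v => tlang u * tlang v
  | .inter u v => {w | w ∈ tlang u ∧ w ∈ tlang v}

/-- Segment of a word. -/
def seg (w : List A) (i j : ℕ) : List A := (w.drop i).take (j - i)

lemma seg_full (w : List A) : seg w 0 w.length = w := by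
  simp [seg]

lemma seg_single {w : List A} {i : ℕ} {a : A} (h : w[i]? = some a) :
    seg w i (i + 1) = [a] := by
  obtain ⟨hi, rfl⟩ := List.getElem?_eq_some_iff.1 h
  unfold seg
  rw [show i + 1 - i = 1 by omega, List.drop_eq_getElem_cons hi,
    List.take_succ_cons, List.take_zero]

lemma seg_append {w : List A} {i m j : ℕ} (h1 : i ≤ m) (h2 : m ≤ j) :
    seg w i j = seg w i m ++ seg w m j := by
  unfold seg
  have e1 : j - i = (m - i) + (j - m) := by omega
  rw [e1, List.take_add, List.drop_drop]
  have e2 : i + (m - i) = m := by omega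
  rw [e2]

/-- A "numeric homomorphism" of a graph into a word, with prescribed values on
input and output. -/
def NHom (G : PGraph A) (W : List A) (i j : ℕ) : Prop :=
  ∃ φ : G.V → ℕ, φ G.inp = i ∧ φ G.out = j ∧
    ∀ p a q, (p, a, q) ∈ G.E → φ q = φ p + 1 ∧ W[φ p]? = some a

/-- Left injection into a series composition. -/
def seqL {G H : PGraph A} (p : G.V) : (gseq G H).V := Quot.mk _ (Sum.inl p)

/-- Right injection into a series composition. -/
def seqR {G H : PGraph A} (p : H.V) : (gseq G H).V := Quot.mk _ (Sum.inr p)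

lemma seq_glue {G H : PGraph A} : (seqL G.out : (gseq G H).V) = seqR H.inp :=
  Quot.sound ⟨rfl, rfl⟩

lemma seq_inp {G H : PGraph A} : (gseq G H).inp = seqL G.inp := rfl

lemma seq_out {G H : PGraph A} : (gseq G H).out = seqR H.out := rfl

lemma seqL_edge {G H : PGraph A} {p a q} (h : (p, a, q) ∈ G.E) :
    ((seqL p : (gseq G H).V), a, seqL q) ∈ (gseq G H).E :=
  Or.inl ⟨p, a, q, h, rfl⟩

lemma seqR_edge {G H : PGraph A} {p a q} (h : (p, a, q) ∈ H.E) :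
    ((seqR p : (gseq G H).V), a, seqR q) ∈ (gseq G H).E :=
  Or.inr ⟨p, a, q, h, rfl⟩

lemma seq_edge_cases {G H : PGraph A} {e : (gseq G H).V × A × (gseq G H).V}
    (h : e ∈ (gseq G H).E) :
    (∃ p a q, (p, a, q) ∈ G.E ∧ e = ((seqL p : (gseq G H).V), a, seqL q))
      ∨ (∃ p a q, (p, a, q) ∈ H.E ∧ e = ((seqR p : (gseq G H).V), a, seqR q)) := h

/-- Left injection into a parallel composition. -/
def parL {G H : PGraph A} (p : G.V) : (gpar G H).V := Quot.mk _ (Sum.inl p)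

/-- Right injection into a parallel composition. -/
def parR {G H : PGraph A} (p : H.V) : (gpar G H).V := Quot.mk _ (Sum.inr p)

lemma par_glue_inp {G H : PGraph A} : (parL G.inp : (gpar G H).V) = parR H.inp :=
  Quot.sound (Or.inl ⟨rfl, rfl⟩)

lemma par_glue_out {G H : PGraph A} : (parL G.out : (gpar G H).V) = parR H.out :=
  Quot.sound (Or.inr ⟨rfl, rfl⟩)

lemma par_inp {G H : PGraph A} : (gpar G H).inp = parL G.inp := rfl

lemma par_out {G H : PGraph A} : (gpar G H).out = parL G.out := rfl

lemma parL_edge {G H : PGraph A} {p a q} (h : (p, a, q) ∈ G.E) :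
    ((parL p : (gpar G H).V), a, parL q) ∈ (gpar G H).E :=
  Or.inl ⟨p, a, q, h, rfl⟩

lemma parR_edge {G H : PGraph A} {p a q} (h : (p, a, q) ∈ H.E) :
    ((parR p : (gpar G H).V), a, parR q) ∈ (gpar G H).E :=
  Or.inr ⟨p, a, q, h, rfl⟩

lemma par_edge_cases {G H : PGraph A} {e : (gpar G H).V × A × (gpar G H).V}
    (h : e ∈ (gpar G H).E) :
    (∃ p a q, (p, a, q) ∈ G.E ∧ e = ((parL p : (gpar G H).V), a, parL q))
      ∨ (∃ p a q, (p, a, q) ∈ H.E ∧ e = ((parR p : (gpar G H).V), a, parR q)) := h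

end AuxHelpers
section AuxHelpers2

variable {A : Type}

lemma nhom_gseq {G H : PGraph A} {W : List A} {i j k : ℕ}
    (hG : NHom G W i j) (hH : NHom H W j k) : NHom (gseq G H) W i k := by
  obtain ⟨φ1, h1i, h1o, h1e⟩ := hG
  obtain ⟨φ2, h2i, h2o, h2e⟩ := hH
  refine ⟨Quot.lift (Sum.elim φ1 φ2) ?_, h1i, h2o, ?_⟩
  · rintro x y ⟨rfl, rfl⟩
    simp [h1o, h2i]
  · intro p a q hpq
    rcases seq_edge_cases hpq with ⟨p', a', q', he, heq⟩ | ⟨p', a', q', he, heq⟩ <;>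
      (simp only [Prod.mk.injEq] at heq; obtain ⟨rfl, rfl, rfl⟩ := heq)
    · exact h1e _ _ _ he
    · exact h2e _ _ _ he

lemma nhom_gpar {G H : PGraph A} {W : List A} {i j : ℕ}
    (hG : NHom G W i j) (hH : NHom H W i j) : NHom (gpar G H) W i j := by
  obtain ⟨φ1, h1i, h1o, h1e⟩ := hG
  obtain ⟨φ2, h2i, h2o, h2e⟩ := hH
  refine ⟨Quot.lift (Sum.elim φ1 φ2) ?_, h1i, h1o, ?_⟩
  · rintro x y (⟨rfl, rfl⟩ | ⟨rfl, rfl⟩)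
    · simp [h1i, h2i]
    · simp [h1o, h2o]
  · intro p a q hpq
    rcases par_edge_cases hpq with ⟨p', a', q', he, heq⟩ | ⟨p', a', q', he, heq⟩ <;>
      (simp only [Prod.mk.injEq] at heq; obtain ⟨rfl, rfl, rfl⟩ := heq)
    · exact h1e _ _ _ he
    · exact h2e _ _ _ he

lemma nhom_tlang (u : STrm A) : ∀ (x w y : List A), w ∈ tlang u →
    NHom (sgrOf u) (x ++ w ++ y) x.length (x.length + w.length) := by
  induction u with
  | var a =>
    intro x w y hw
    obtain rfl : w = [a] := hw
    refine ⟨(fun b => if b then x.length + 1 else x.length : Bool → ℕ), rfl, rfl, ?_⟩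
    intro p b q hpq
    have hpq' : (p, b, q) = (false, a, true) := hpq
    replace hpq' : _ ∧ _ ∧ _ := ⟨(Prod.mk.inj hpq').1, Prod.mk.inj (Prod.mk.inj hpq').2⟩
    obtain ⟨rfl, rfl, rfl⟩ := hpq'
    refine ⟨by simp, ?_⟩
    have hx : ∀ c : A, (x ++ [c] ++ y)[x.length]? = some c := by
      intro c
      rw [List.getElem?_append_left (by simp : x.length < (x ++ [c]).length),
        List.getElem?_append_right (le_refl _)]
      simp
    simpa using hx _
  | comp u v ihu ihv =>
    intro x w y hw
    rw [show tlang (STrm.comp u v) = tlang u * tlang v from rfl,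
      Language.mem_mul] at hw
    obtain ⟨w1, h1, w2, h2, rfl⟩ := hw
    have H1 := ihu x w1 (w2 ++ y) h1
    have H2 := ihv (x ++ w1) w2 y h2
    rw [show x ++ w1 ++ (w2 ++ y) = x ++ (w1 ++ w2) ++ y by simp] at H1
    rw [show x ++ w1 ++ w2 ++ y = x ++ (w1 ++ w2) ++ y by simp,
      show (x ++ w1).length = x.length + w1.length by simp] at H2
    have H3 := nhom_gseq H1 H2
    rw [show x.length + (w1 ++ w2).length = x.length + w1.length + w2.length by
      simp [Nat.add_assoc]]
    exact H3
  | inter u v ihu ihv =>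
    intro x w y hw
    exact nhom_gpar (ihu x w y hw.1) (ihv x w y hw.2)

lemma nhom_inv (u : STrm A) : ∀ (W : List A) (φ : (sgrOf u).V → ℕ),
    (∀ p a q, (p, a, q) ∈ (sgrOf u).E → φ q = φ p + 1 ∧ W[φ p]? = some a) →
    φ (sgrOf u).inp ≤ φ (sgrOf u).out ∧
      seg W (φ (sgrOf u).inp) (φ (sgrOf u).out) ∈ tlang u := by
  induction u with
  | var a =>
    intro W φ h
    obtain ⟨h1, h2⟩ := h false a true rfl
    have einp : (sgrOf (STrm.var a)).inp = false := rfl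
    have eout : (sgrOf (STrm.var a)).out = true := rfl
    rw [einp, eout, h1]
    exact ⟨Nat.le_succ _, by rw [seg_single h2]; exact rfl⟩
  | comp u v ihu ihv =>
    intro W φ h
    have h1e : ∀ p a q, (p, a, q) ∈ (sgrOf u).E →
        φ (seqL p) = φ (seqL p) ∧ True := fun _ _ _ _ => ⟨rfl, trivial⟩
    obtain ⟨le1, m1⟩ := ihu W (fun p => φ (seqL p))
      (fun p a q hpq => h _ _ _ (seqL_edge hpq))
    obtain ⟨le2, m2⟩ := ihv W (fun p => φ (seqR p))
      (fun p a q hpq => h _ _ _ (seqR_edge hpq))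
    have key : φ (seqL (sgrOf u).out) = φ (seqR (sgrOf v).inp) :=
      congrArg φ seq_glue
    have ginp : (sgrOf (STrm.comp u v)).inp = seqL (sgrOf u).inp := rfl
    have gout : (sgrOf (STrm.comp u v)).out = seqR (sgrOf v).out := rfl
    rw [ginp, gout]
    rw [key] at le1 m1
    refine ⟨le1.trans le2, ?_⟩
    rw [seg_append le1 le2]
    exact Language.append_mem_mul m1 m2
  | inter u v ihu ihv =>
    intro W φ h
    obtain ⟨le1, m1⟩ := ihu W (fun p => φ (parL p))
      (fun p a q hpq => h _ _ _ (parL_edge hpq))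
    obtain ⟨le2, m2⟩ := ihv W (fun p => φ (parR p))
      (fun p a q hpq => h _ _ _ (parR_edge hpq))
    have key1 : φ (parL (sgrOf u).inp) = φ (parR (sgrOf v).inp) :=
      congrArg φ par_glue_inp
    have key2 : φ (parL (sgrOf u).out) = φ (parR (sgrOf v).out) :=
      congrArg φ par_glue_out
    have ginp : (sgrOf (STrm.inter u v)).inp = parL (sgrOf u).inp := rfl
    have gout : (sgrOf (STrm.inter u v)).out = parL (sgrOf u).out := rfl
    rw [ginp, gout]
    rw [← key1, ← key2] at m2
    exact ⟨le1, m1, m2⟩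

lemma nhom_of_gle {G : PGraph A} {w : List A} (h : gle (wordGraph w) G) :
    NHom G w 0 w.length := by
  obtain ⟨φ, hi, ho, he⟩ := h
  refine ⟨fun v => (φ v).1, by show (φ G.inp).1 = 0; rw [hi]; rfl, by show (φ G.out).1 = w.length; rw [ho]; rfl, ?_⟩
  intro p a q hpq
  obtain ⟨k, hk⟩ := he p a q hpq
  replace hk : _ ∧ _ ∧ _ := ⟨(Prod.mk.inj hk).1, Prod.mk.inj (Prod.mk.inj hk).2⟩
  obtain ⟨hp, ha, hq⟩ := hk
  show (φ q).1 = (φ p).1 + 1 ∧ w[(φ p).1]? = some a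
  rw [hp, hq]
  refine ⟨rfl, ?_⟩
  rw [List.getElem?_eq_getElem k.isLt, ha, List.get_eq_getElem]

lemma gle_of_nhom {G : PGraph A} {w : List A} (h : NHom G w 0 w.length) :
    gle (wordGraph w) G := by
  obtain ⟨φ, hi, ho, he⟩ := h
  refine ⟨fun v => ⟨min (φ v) w.length, Nat.lt_succ_of_le (Nat.min_le_right _ _)⟩,
    ?_, ?_, ?_⟩
  · exact Fin.ext (by show min (φ G.inp) w.length = 0; simp [hi])
  · exact Fin.ext (by show min (φ G.out) w.length = w.length; simp [ho])
  · intro p a q hpq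
    obtain ⟨h1, h2⟩ := he p a q hpq
    obtain ⟨hlt, hget⟩ := List.getElem?_eq_some_iff.1 h2
    refine ⟨⟨φ p, hlt⟩, ?_⟩
    refine Prod.ext (Fin.ext ?_) (Prod.ext ?_ (Fin.ext ?_))
    · show min (φ p) w.length = φ p
      omega
    · rw [List.get_eq_getElem]
      exact hget.symm
    · show min (φ q) w.length = φ p + 1
      omega

lemma tlang_iff_gle (v : STrm A) (w : List A) :
    w ∈ tlang v ↔ gle (wordGraph w) (sgrOf v) := by
  constructor
  · intro h
    have H := nhom_tlang v [] w [] h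
    simp only [List.nil_append, List.append_nil, List.length_nil, Nat.zero_add] at H
    exact gle_of_nhom H
  · intro h
    obtain ⟨φ, hi, ho, he⟩ := nhom_of_gle h
    have H := nhom_inv v w φ he
    rw [hi, ho] at H
    simpa [seg_full] using H.2

end AuxHelpers2
section AuxHelpers3

variable {A : Type}

lemma gle_trans {G H K : PGraph A} (h1 : gle G H) (h2 : gle H K) : gle G K := by
  obtain ⟨φ, hφi, hφo, hφe⟩ := h1
  obtain ⟨ψ, hψi, hψo, hψe⟩ := h2
  exact ⟨fun v => φ (ψ v), by show φ (ψ K.inp) = G.inp; rw [hψi, hφi], by show φ (ψ K.out) = G.out; rw [hψo, hφo],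
    fun p a q h => hφe _ _ _ (hψe _ _ _ h)⟩

/-- A numeric path homomorphism from the word `w` into the graph `G`. -/
def NWH (G : PGraph A) (w : List A) : Prop :=
  ∃ g : ℕ → G.V, g 0 = G.inp ∧ g w.length = G.out ∧
    ∀ k a, w[k]? = some a → (g k, a, g (k + 1)) ∈ G.E

lemma gle_of_nwh {G : PGraph A} {w : List A} (h : NWH G w) : gle G (wordGraph w) := by
  obtain ⟨g, h0, hn, he⟩ := h
  refine ⟨fun v => g v.1, h0, hn, ?_⟩
  intro p a q hpq
  obtain ⟨k, hk⟩ := hpq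
  replace hk : _ ∧ _ ∧ _ := ⟨(Prod.mk.inj hk).1, Prod.mk.inj (Prod.mk.inj hk).2⟩
  obtain ⟨rfl, rfl, rfl⟩ := hk
  exact he k.1 _ (by rw [List.get_eq_getElem]; exact List.getElem?_eq_getElem k.isLt)

lemma nwh_var (a : A) : NWH (sgrOf (STrm.var a)) [a] := by
  refine ⟨(fun k => if k = 0 then false else true : ℕ → Bool), rfl, rfl, ?_⟩
  intro k b hk
  match k with
  | 0 =>
    obtain rfl : a = b := by simpa using hk
    exact rfl
  | (n+1) => simp at hk

lemma nwh_comp {u v : STrm A} {w1 w2 : List A} (hne : w1 ≠ [])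
    (h1 : NWH (sgrOf u) w1) (h2 : NWH (sgrOf v) w2) :
    NWH (sgrOf (STrm.comp u v)) (w1 ++ w2) := by
  obtain ⟨g1, g10, g1n, g1e⟩ := h1
  obtain ⟨g2, g20, g2n, g2e⟩ := h2
  have hpos : 0 < w1.length := List.length_pos_iff.2 hne
  refine ⟨fun k => if k < w1.length then (seqL (g1 k) : (sgrOf (STrm.comp u v)).V)
      else seqR (g2 (k - w1.length)), ?_, ?_, ?_⟩
  · show (if 0 < w1.length then (seqL (g1 0) : (sgrOf (STrm.comp u v)).V)
      else seqR (g2 (0 - w1.length))) = _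
    rw [if_pos hpos, g10]
    rfl
  · show (if (w1 ++ w2).length < w1.length then (seqL (g1 (w1 ++ w2).length) :
      (sgrOf (STrm.comp u v)).V) else seqR (g2 ((w1 ++ w2).length - w1.length))) = _
    rw [List.length_append, if_neg (by omega),
      show w1.length + w2.length - w1.length = w2.length by omega, g2n]
    rfl
  · intro k a hk
    by_cases hlt : k < w1.length
    · have hk1 : w1[k]? = some a := by rwa [List.getElem?_append_left hlt] at hk
      have hE := g1e k a hk1
      have hgk1 : (if k + 1 < w1.length then (seqL (g1 (k + 1)) :
          (sgrOf (STrm.comp u v)).V) else seqR (g2 (k + 1 - w1.length)))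
          = seqL (g1 (k + 1)) := by
        by_cases h2' : k + 1 < w1.length
        · rw [if_pos h2']
        · rw [if_neg h2', show k + 1 - w1.length = 0 by omega, g20,
            show k + 1 = w1.length by omega, g1n]
          exact seq_glue.symm
      show (if k < w1.length then _ else _, a,
        if k + 1 < w1.length then _ else _) ∈ (sgrOf (STrm.comp u v)).E
      simp only [hlt, ↓reduceIte]
      have := seqL_edge (H := sgrOf v) hE
      rw [← hgk1] at this
      exact this
    · have hk2 : w2[k - w1.length]? = some a := by
        rwa [List.getElem?_append_right (by omega)] at hk
      have hE := g2e _ a hk2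
      show (if k < w1.length then _ else _, a,
        if k + 1 < w1.length then _ else _) ∈ (sgrOf (STrm.comp u v)).E
      simp only [hlt, show ¬ (k + 1 < w1.length) by omega, ↓reduceIte,
        show k + 1 - w1.length = (k - w1.length) + 1 by omega]
      exact seqR_edge hE

/-- `u` is a word term for the (nonempty) word `w`. -/
def WT (u : STrm A) (w : List A) : Prop :=
  w ≠ [] ∧ w ∈ tlang u ∧ NWH (sgrOf u) w

lemma wt_var (a : A) : WT (STrm.var a) [a] :=
  ⟨by simp, rfl, nwh_var a⟩

lemma wt_comp {u v : STrm A} {w1 w2 : List A} (h1 : WT u w1) (h2 : WT v w2) :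
    WT (STrm.comp u v) (w1 ++ w2) :=
  ⟨by simp [h1.1], Language.append_mem_mul h1.2.1 h2.2.1,
    nwh_comp h1.1 h1.2.2 h2.2.2⟩

lemma wt_foldl : ∀ (cs : List A) (u : STrm A) (w : List A), WT u w →
    WT ((cs.map STrm.var).foldl STrm.comp u) (w ++ cs)
  | [], u, w, h => by simpa using h
  | c :: cs, u, w, h => by
    have H := wt_foldl cs (STrm.comp u (STrm.var c)) (w ++ [c]) (wt_comp h (wt_var c))
    have e : (w ++ [c]) ++ cs = w ++ c :: cs := by simp
    rw [e] at H
    exact H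

lemma wt_decode : ∀ (ls : List (STrm A)) (u : STrm A) (w : List A), WT u w →
    (∀ t ∈ ls, ∃ x, t = STrm.var x) → ∃ w', WT (ls.foldl STrm.comp u) w'
  | [], u, w, h, _ => ⟨w, h⟩
  | t :: ls, u, w, h, hls => by
    obtain ⟨x, rfl⟩ := hls t (by simp)
    exact wt_decode ls _ (w ++ [x]) (wt_comp h (wt_var x))
      (fun s hs => hls s (by simp [hs]))

lemma strms_foldl_plus : ∀ (l : List A) (E : SExp A) (t : STrm A),
    (t ∈ strms (l.foldl (fun e b => SExp.plus e (SExp.var b)) E) ↔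
      t ∈ strms E ∨ ∃ x ∈ l, t = STrm.var x)
  | [], E, t => by simp
  | b :: l, E, t => by
    rw [List.foldl_cons, strms_foldl_plus l]
    have hE : strms (SExp.plus E (SExp.var b)) = strms E ∪ {STrm.var b} := rfl
    rw [hE]
    constructor
    · rintro ((h | h) | ⟨x, hx, rfl⟩)
      · exact Or.inl h
      · exact Or.inr ⟨b, by simp, h⟩
      · exact Or.inr ⟨x, by simp [hx], rfl⟩
    · rintro (h | ⟨x, hx, rfl⟩)
      · exact Or.inl (Or.inl h)
      · rcases (by simpa using hx : x = b ∨ x ∈ l) with rfl | hx'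
        · exact Or.inl (Or.inr rfl)
        · exact Or.inr ⟨x, hx', rfl⟩

lemma sinterp_foldl_plus : ∀ (l : List A) (E : SExp A) {S : Type}
    (σ : A → S → S → Prop) (i j : S),
    (sinterp σ (l.foldl (fun e b => SExp.plus e (SExp.var b)) E) i j ↔
      sinterp σ E i j ∨ ∃ x ∈ l, σ x i j)
  | [], E, S, σ, i, j => by simp
  | b :: l, E, S, σ, i, j => by
    rw [List.foldl_cons, sinterp_foldl_plus l]
    have hE : sinterp σ (SExp.plus E (SExp.var b)) i j ↔
        sinterp σ E i j ∨ σ b i j := Iff.rfl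
    rw [hE]
    constructor
    · rintro ((h | h) | ⟨x, hx, h⟩)
      · exact Or.inl h
      · exact Or.inr ⟨b, by simp, h⟩
      · exact Or.inr ⟨x, by simp [hx], h⟩
    · rintro (h | ⟨x, hx, h⟩)
      · exact Or.inl (Or.inl h)
      · rcases (by simpa using hx : x = b ∨ x ∈ l) with rfl | hx'
        · exact Or.inl (Or.inr h)
        · exact Or.inr ⟨x, hx', h⟩

end AuxHelpers3
section AuxHelpers4

variable {A : Type}

/-- Relational interpretation of a word as a chain of letter steps. -/
def wrel {S : Type} (σ : A → S → S → Prop) : List A → S → S → Prop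
  | [], i, j => i = j
  | a :: w, i, j => ∃ k, σ a i k ∧ wrel σ w k j

lemma wrel_append {S : Type} (σ : A → S → S → Prop) :
    ∀ (w1 w2 : List A) (i j : S),
    (wrel σ (w1 ++ w2) i j ↔ ∃ m, wrel σ w1 i m ∧ wrel σ w2 m j)
  | [], w2, i, j => by simp [wrel]
  | a :: w1, w2, i, j => by
    constructor
    · intro h
      have h' : ∃ k, σ a i k ∧ wrel σ (w1 ++ w2) k j := h
      obtain ⟨k, hk, hrest⟩ := h'
      obtain ⟨m, hm1, hm2⟩ := (wrel_append σ w1 w2 k j).1 hrest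
      exact ⟨m, ⟨k, hk, hm1⟩, hm2⟩
    · intro h
      have h' : ∃ m, (∃ k, σ a i k ∧ wrel σ w1 k m) ∧ wrel σ w2 m j := h
      obtain ⟨m, ⟨k, hk, hm1⟩, hm2⟩ := h'
      exact ⟨k, hk, (wrel_append σ w1 w2 k j).2 ⟨m, hm1, hm2⟩⟩

lemma kstar_append {L : Language A} {x y : List A}
    (hx : x ∈ KStar.kstar L) (hy : y ∈ L) : x ++ y ∈ KStar.kstar L := by
  obtain ⟨l, rfl, hl⟩ := Language.mem_kstar.1 hx
  refine Language.mem_kstar.2 ⟨l ++ [y], by simp, fun z hz => ?_⟩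
  rcases List.mem_append.1 hz with h | h
  · exact hl z h
  · rw [List.mem_singleton] at h
    exact h ▸ hy

lemma mem_mul_kstar_self {L : Language A} {x : List A} (hx : x ∈ L) :
    x ∈ L * KStar.kstar L := by
  have := Language.append_mem_mul hx (Language.nil_mem_kstar L)
  simpa using this

lemma mem_mul_kstar_append {L : Language A} {x y : List A}
    (hx : x ∈ L * KStar.kstar L) (hy : y ∈ L) : x ++ y ∈ L * KStar.kstar L := by
  rw [Language.mem_mul] at hx ⊢
  obtain ⟨u, hu, v, hv, rfl⟩ := hx
  exact ⟨u, hu, v ++ y, kstar_append hv hy, by rw [List.append_assoc]⟩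

lemma slang_wrel : ∀ (e : SExp A) (w : List A), w ∈ slang e →
    ∀ {S : Type} (σ : A → S → S → Prop) (i j : S), wrel σ w i j → sinterp σ e i j := by
  intro e
  induction e with
  | var a =>
    intro w hw S σ i j h
    obtain rfl : w = [a] := hw
    obtain ⟨k, hk, hk2⟩ := h
    have : k = j := hk2
    exact this ▸ hk
  | plus e f ihe ihf =>
    intro w hw S σ i j h
    rcases (Language.mem_add _ _ _).1 hw with hw | hw
    · exact Or.inl (ihe w hw σ i j h)
    · exact Or.inr (ihf w hw σ i j h)
  | comp e f ihe ihf =>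
    intro w hw S σ i j h
    rw [show slang (SExp.comp e f) = slang e * slang f from rfl,
      Language.mem_mul] at hw
    obtain ⟨w1, h1, w2, h2, rfl⟩ := hw
    obtain ⟨m, hm1, hm2⟩ := (wrel_append σ w1 w2 i j).1 h
    exact ⟨m, ihe w1 h1 σ i m hm1, ihf w2 h2 σ m j hm2⟩
  | inter e f ihe ihf =>
    intro w hw S σ i j h
    exact ⟨ihe w hw.1 σ i j h, ihf w hw.2 σ i j h⟩
  | iter e ihe =>
    intro w hw S σ i j h
    rw [show slang (SExp.iter e) = slang e * KStar.kstar (slang e) from rfl,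
      Language.mem_mul] at hw
    obtain ⟨w0, h0, w1, h1, rfl⟩ := hw
    obtain ⟨L, rfl, hall⟩ := Language.mem_kstar.1 h1
    obtain ⟨m, hm0, hm1⟩ := (wrel_append σ w0 L.flatten i j).1 h
    have base : Relation.TransGen (sinterp σ e) i m := .single (ihe w0 h0 σ i m hm0)
    show Relation.TransGen (sinterp σ e) i j
    have key : ∀ (L : List (List A)), (∀ y ∈ L, y ∈ slang e) → ∀ m,
        Relation.TransGen (sinterp σ e) i m → wrel σ L.flatten m j →
        Relation.TransGen (sinterp σ e) i j := by
      intro L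
      induction L with
      | nil =>
        intro _ m hb hw'
        have : m = j := hw'
        exact this ▸ hb
      | cons p L ih =>
        intro hall' m hb hw'
        rw [List.flatten_cons, wrel_append σ p L.flatten m j] at hw'
        obtain ⟨m', h1', h2'⟩ := hw'
        exact ih (fun y hy => hall' y (by simp [hy])) m'
          (hb.trans (.single (ihe p (hall' p (by simp)) σ m m' h1'))) h2'
    exact key L hall m base hm1

lemma transgen_wrel {S : Type} {σ : A → S → S → Prop} {R : S → S → Prop}
    (hR : ∀ i j, R i j → ∃ x, σ x i j) {i j : S} (h : Relation.TransGen R i j) :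
    ∃ w : List A, w ≠ [] ∧ wrel σ w i j := by
  induction h with
  | single h1 =>
    obtain ⟨x, hx⟩ := hR _ _ h1
    exact ⟨[x], by simp, ⟨_, hx, rfl⟩⟩
  | tail h1 h2 ih =>
    obtain ⟨w, hw, hwr⟩ := ih
    obtain ⟨x, hx⟩ := hR _ _ h2
    exact ⟨w ++ [x], by simp, (wrel_append σ w [x] _ _).2 ⟨_, hwr, _, hx, rfl⟩⟩

lemma transgen_steps (w : List A) (R : ℕ → ℕ → Prop)
    (hstep : ∀ k, k < w.length → R k (k + 1)) :
    ∀ m, 0 < m → m ≤ w.length → Relation.TransGen R 0 m := by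
  intro m
  induction m with
  | zero => omega
  | succ n ih =>
    intro _ hle
    rcases Nat.eq_zero_or_pos n with rfl | hn
    · exact .single (hstep 0 (by omega))
    · exact .tail (ih hn (by omega)) (hstep n (by omega))

lemma sinterp_word (w : List A) : ∀ (e : SExp A) (i j : ℕ),
    sinterp (fun x p q => q = p + 1 ∧ w[p]? = some x) e i j →
    i ≤ j ∧ seg w i j ∈ slang e := by
  intro e
  induction e with
  | var a =>
    intro i j h
    obtain ⟨rfl, hget⟩ := h
    exact ⟨Nat.le_succ _, by rw [seg_single hget]; exact rfl⟩
  | plus e f ihe ihf =>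
    intro i j h
    rcases h with h | h
    · obtain ⟨hle, hm⟩ := ihe _ _ h
      exact ⟨hle, (Language.mem_add _ _ _).2 (Or.inl hm)⟩
    · obtain ⟨hle, hm⟩ := ihf _ _ h
      exact ⟨hle, (Language.mem_add _ _ _).2 (Or.inr hm)⟩
  | comp e f ihe ihf =>
    intro i j h
    obtain ⟨k, h1, h2⟩ := h
    obtain ⟨l1, m1⟩ := ihe _ _ h1
    obtain ⟨l2, m2⟩ := ihf _ _ h2
    exact ⟨l1.trans l2, by rw [seg_append l1 l2]; exact Language.append_mem_mul m1 m2⟩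
  | inter e f ihe ihf =>
    intro i j h
    obtain ⟨l1, m1⟩ := ihe _ _ h.1
    obtain ⟨_, m2⟩ := ihf _ _ h.2
    exact ⟨l1, m1, m2⟩
  | iter e ihe =>
    intro i j h
    have h' : Relation.TransGen
        (sinterp (fun x p q => q = p + 1 ∧ w[p]? = some x) e) i j := h
    clear h
    induction h' with
    | single h1 =>
      obtain ⟨l1, m1⟩ := ihe _ _ h1
      exact ⟨l1, mem_mul_kstar_self m1⟩
    | tail h1 h2 ih =>
      obtain ⟨l1, m1⟩ := ih
      obtain ⟨l2, m2⟩ := ihe _ _ h2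
      refine ⟨l1.trans l2, ?_⟩
      rw [seg_append l1 l2]
      exact mem_mul_kstar_append m1 m2

end AuxHelpers4
section AuxHelpers5

variable {A : Type}

lemma slang_iff_strms (e : SExp A) (w : List A) :
    w ∈ slang e ↔ ∃ v ∈ strms e, w ∈ tlang v := by
  induction e generalizing w with
  | var a =>
    constructor
    · intro hw
      exact ⟨STrm.var a, rfl, hw⟩
    · rintro ⟨v, hv, ht⟩
      obtain rfl : v = STrm.var a := hv
      exact ht
  | plus e f ihe ihf =>
    constructor
    · intro hw
      rcases (Language.mem_add _ _ _).1 hw with hw | hw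
      · obtain ⟨v, hv, ht⟩ := (ihe w).1 hw
        exact ⟨v, Or.inl hv, ht⟩
      · obtain ⟨v, hv, ht⟩ := (ihf w).1 hw
        exact ⟨v, Or.inr hv, ht⟩
    · rintro ⟨v, hv, ht⟩
      rcases hv with hv | hv
      · exact (Language.mem_add _ _ _).2 (Or.inl ((ihe w).2 ⟨v, hv, ht⟩))
      · exact (Language.mem_add _ _ _).2 (Or.inr ((ihf w).2 ⟨v, hv, ht⟩))
  | comp e f ihe ihf =>
    constructor
    · intro hw
      rw [show slang (SExp.comp e f) = slang e * slang f from rfl,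
        Language.mem_mul] at hw
      obtain ⟨w1, h1, w2, h2, rfl⟩ := hw
      obtain ⟨v1, hv1, ht1⟩ := (ihe w1).1 h1
      obtain ⟨v2, hv2, ht2⟩ := (ihf w2).1 h2
      exact ⟨STrm.comp v1 v2, ⟨v1, hv1, v2, hv2, rfl⟩,
        Language.append_mem_mul ht1 ht2⟩
    · rintro ⟨v, hv, ht⟩
      obtain ⟨u1, h1, u2, h2, rfl⟩ := hv
      rw [show tlang (STrm.comp u1 u2) = tlang u1 * tlang u2 from rfl,
        Language.mem_mul] at ht
      obtain ⟨w1, hw1, w2, hw2, rfl⟩ := ht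
      exact Language.append_mem_mul ((ihe w1).2 ⟨u1, h1, hw1⟩)
        ((ihf w2).2 ⟨u2, h2, hw2⟩)
  | inter e f ihe ihf =>
    constructor
    · intro hw
      obtain ⟨v1, hv1, ht1⟩ := (ihe w).1 hw.1
      obtain ⟨v2, hv2, ht2⟩ := (ihf w).1 hw.2
      exact ⟨STrm.inter v1 v2, ⟨v1, hv1, v2, hv2, rfl⟩, ht1, ht2⟩
    · rintro ⟨v, hv, ht⟩
      obtain ⟨u1, h1, u2, h2, rfl⟩ := hv
      exact ⟨(ihe w).2 ⟨u1, h1, ht.1⟩, (ihf w).2 ⟨u2, h2, ht.2⟩⟩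
  | iter e ihe =>
    constructor
    · intro hw
      rw [show slang (SExp.iter e) = slang e * KStar.kstar (slang e) from rfl,
        Language.mem_mul] at hw
      obtain ⟨w0, h0, w1, h1, rfl⟩ := hw
      obtain ⟨L, rfl, hall⟩ := Language.mem_kstar.1 h1
      obtain ⟨u0, hu0, ht0⟩ := (ihe w0).1 h0
      have key : ∀ (L : List (List A)), (∀ p ∈ L, p ∈ slang e) →
          ∀ (u : STrm A) (w0 : List A), u ∈ strms e ∨ True → w0 ∈ tlang u →
          ∃ ts : List (STrm A), (∀ t ∈ ts, t ∈ strms e) ∧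
            w0 ++ L.flatten ∈ tlang (ts.foldl STrm.comp u) := by
        intro L
        induction L with
        | nil =>
          intro _ u w0 _ hw0
          exact ⟨[], by simp, by simpa using hw0⟩
        | cons p L ih =>
          intro hall' u w0 _ hw0
          obtain ⟨t, ht, htl⟩ := (ihe p).1 (hall' p (by simp))
          obtain ⟨ts, hts, hmem⟩ := ih (fun q hq => hall' q (by simp [hq]))
            (STrm.comp u t) (w0 ++ p) (Or.inr trivial)
            (Language.append_mem_mul hw0 htl)
          refine ⟨t :: ts, ?_, ?_⟩
          · intro s hs
            rcases List.mem_cons.1 hs with rfl | hs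
            · exact ht
            · exact hts s hs
          · rw [List.flatten_cons, ← List.append_assoc]
            exact hmem
      obtain ⟨ts, hts, hmem⟩ := key L hall u0 w0 (Or.inl hu0) ht0
      exact ⟨ts.foldl STrm.comp u0, ⟨u0, ts, hu0, hts, rfl⟩, hmem⟩
    · rintro ⟨v, hv, ht⟩
      obtain ⟨u, ls, hu, hls, rfl⟩ := hv
      show (fun w => w ∈ slang (SExp.iter e)) w
      have key : ∀ (ls : List (STrm A)), (∀ t ∈ ls, t ∈ strms e) →
          ∀ (u : STrm A), u ∈ strms e → ∀ w, w ∈ tlang (ls.foldl STrm.comp u) →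
          w ∈ slang e * KStar.kstar (slang e) := by
        intro ls
        induction ls using List.reverseRecOn with
        | nil =>
          intro _ u hu w hw
          exact mem_mul_kstar_self ((ihe w).2 ⟨u, hu, hw⟩)
        | append_singleton ls t ih =>
          intro hls' u hu w hw
          rw [List.foldl_append] at hw
          rw [show (List.foldl STrm.comp (ls.foldl STrm.comp u) [t]) =
            STrm.comp (ls.foldl STrm.comp u) t from rfl,
            show tlang (STrm.comp (ls.foldl STrm.comp u) t) =
              tlang (ls.foldl STrm.comp u) * tlang t from rfl,
            Language.mem_mul] at hw
          obtain ⟨w1, h1, w2, h2, rfl⟩ := hw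
          have hw1 := ih (fun s hs => hls' s (by simp [hs])) u hu w1 h1
          have hw2 : w2 ∈ slang e := (ihe w2).2 ⟨t, hls' t (by simp), h2⟩
          exact mem_mul_kstar_append hw1 hw2
      exact key ls hls u hu _ ht
end AuxHelpers5

/-- For every nonempty word `w`, `w ∈ L(e)` iff the word-graph of `w` is below
some graph of `e` modulo homomorphism.  Consequently, when `a :: l` enumerates
the alphabet, `Σ⁺ ⊆ L(e)` iff `Trm(Σ⁺) ⊆ ⌊Trm(e)⌋`, iff `Σ⁺ ≤ e` is valid in
all algebras of binary relations. -/
theorem mem_slang_iff_wordGraph_le {A : Type} (e : SExp A) :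
    (∀ w : List A, w ≠ [] →
        (w ∈ slang e ↔ ∃ v ∈ strms e, gle (wordGraph w) (sgrOf v)))
    ∧ (∀ (a : A) (l : List A), (∀ x : A, x = a ∨ x ∈ l) →
        (((∀ w : List A, w ≠ [] → w ∈ slang e) ↔
            ∀ u ∈ strms (SExp.iter (sumOf a l)),
              ∃ v ∈ strms e, gle (sgrOf u) (sgrOf v))
          ∧ ((∀ w : List A, w ≠ [] → w ∈ slang e) ↔
            ∀ (S : Type) (σ : A → S → S → Prop) (i j : S),
              sinterp σ (SExp.iter (sumOf a l)) i j → sinterp σ e i j))) := by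
  have part1 : ∀ w : List A,
      (w ∈ slang e ↔ ∃ v ∈ strms e, gle (wordGraph w) (sgrOf v)) := by
    intro w
    rw [slang_iff_strms]
    constructor
    · rintro ⟨v, hv, ht⟩
      exact ⟨v, hv, (tlang_iff_gle v w).1 ht⟩
    · rintro ⟨v, hv, hg⟩
      exact ⟨v, hv, (tlang_iff_gle v w).2 hg⟩
  refine ⟨fun w _ => part1 w, ?_⟩
  intro a l halph
  have hvar : ∀ x : A, STrm.var x ∈ strms (sumOf a l) := by
    intro x
    apply (strms_foldl_plus l (SExp.var a) (STrm.var x)).2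
    rcases halph x with rfl | h
    · exact Or.inl rfl
    · exact Or.inr ⟨x, h, rfl⟩
  have hvar' : ∀ t : STrm A, t ∈ strms (sumOf a l) → ∃ x, t = STrm.var x := by
    intro t ht
    rcases (strms_foldl_plus l (SExp.var a) t).1 ht with h | ⟨x, _, rfl⟩
    · exact ⟨a, h⟩
    · exact ⟨x, rfl⟩
  constructor
  · -- graph-theoretic formulation
    constructor
    · intro hall u hu
      obtain ⟨u0, ls, hu0, hls, rfl⟩ := hu
      obtain ⟨x0, rfl⟩ := hvar' u0 hu0
      obtain ⟨w', hw'⟩ := wt_decode ls (STrm.var x0) [x0] (wt_var x0)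
        (fun t ht => hvar' t (hls t ht))
      have hs : w' ∈ slang e := hall w' hw'.1
      obtain ⟨v, hv, hgv⟩ := (part1 w').1 hs
      exact ⟨v, hv, gle_trans (gle_of_nwh hw'.2.2) hgv⟩
    · intro hyp w hw
      obtain ⟨c, cs, rfl⟩ := List.exists_cons_of_ne_nil hw
      have hwt : WT ((cs.map STrm.var).foldl STrm.comp (STrm.var c)) (c :: cs) := by
        have H := wt_foldl cs (STrm.var c) [c] (wt_var c)
        simpa using H
      have hu : ((cs.map STrm.var).foldl STrm.comp (STrm.var c)) ∈
          strms (SExp.iter (sumOf a l)) := by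
        refine ⟨STrm.var c, cs.map STrm.var, hvar c, ?_, rfl⟩
        intro t ht
        obtain ⟨x, _, rfl⟩ := List.mem_map.1 ht
        exact hvar x
      obtain ⟨v, hv, hgle⟩ := hyp _ hu
      have g1 : gle (wordGraph (c :: cs)) (sgrOf ((cs.map STrm.var).foldl
          STrm.comp (STrm.var c))) := (tlang_iff_gle _ _).1 hwt.2.1
      exact (part1 (c :: cs)).2 ⟨v, hv, gle_trans g1 hgle⟩
  · -- relational formulation
    constructor
    · intro hall S σ i j h
      have h' : Relation.TransGen (sinterp σ (sumOf a l)) i j := h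
      obtain ⟨w, hw, hwr⟩ := transgen_wrel (σ := σ) (fun p q hpq => by
        rcases (sinterp_foldl_plus l (SExp.var a) σ p q).1 hpq with h'' | ⟨x, _, hx⟩
        · exact ⟨a, h''⟩
        · exact ⟨x, hx⟩) h'
      exact slang_wrel e w (hall w hw) σ i j hwr
    · intro hyp w hw
      have hstep : ∀ k, k < w.length →
          sinterp (fun x p q => q = p + 1 ∧ w[p]? = some x) (sumOf a l) k (k + 1) := by
        intro k hk
        apply (sinterp_foldl_plus l (SExp.var a) _ k (k + 1)).2
        rcases halph w[k] with h | h
        · left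
          show (k + 1 = k + 1 ∧ w[k]? = some a)
          exact ⟨rfl, by rw [List.getElem?_eq_getElem hk, h]⟩
        · right
          exact ⟨w[k], h, rfl, List.getElem?_eq_getElem hk⟩
      have htg : Relation.TransGen
          (sinterp (fun x p q => q = p + 1 ∧ w[p]? = some x) (sumOf a l))
          0 w.length :=
        transgen_steps w _ hstep w.length (List.length_pos_iff.2 hw) le_rfl
      have hs := hyp ℕ (fun x p q => q = p + 1 ∧ w[p]? = some x) 0 w.length htg
      have H := sinterp_word w e 0 w.length hs
      simpa [seg_full] using H.2
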